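/- Suppose F₁(ε) + (1/π) log ε and F₂(ε') − (1/π) log ε' are both real analytic functions of their arguments near 0 (in particular single-valued), that ε'(ε) is real analytic and single-valued in ε with ε'(ε) comparable to ε near ε = 0, and that F₁(ε) = F₂(ε'(ε)) for ε in a sequence tending to 0 along which both ε and ε' tend to 0. Then a contradiction follows: under these hypotheses log(ε · ε'(ε)) would be single-valued and bounded analytic near ε = 0, contradicting ε ε'(ε) → 0. -/

import Mathlib

open Filter Topology

/-- Suppose `F₁(ε) = f₁(ε) − (1/π) log ε` and `F₂(ε') = f₂(ε') + (1/π) log ε'` with `f₁`,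
`f₂` real analytic at `0` (i.e. `F₁(ε) + (1/π) log ε` and `F₂(ε') − (1/π) log ε'` are real
analytic, in particular single-valued), `ε'(ε)` is real analytic at `0` and comparable to
`ε`, and `F₁(εₙ) = F₂(ε'(εₙ))` along a positive sequence `εₙ → 0`.  Then a contradiction
follows (`log(ε·ε'(ε))` would be bounded although `ε ε'(ε) → 0`). -/
theorem stmt12 (f₁ f₂ e' : ℝ → ℝ)
    (hf₁ : AnalyticAt ℝ f₁ 0) (hf₂ : AnalyticAt ℝ f₂ 0) (he' : AnalyticAt ℝ e' 0)
    (c C ε₀ : ℝ) (hc : 0 < c) (hC : 0 < C) (hε₀ : 0 < ε₀)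
    (hcomp : ∀ ε ∈ Set.Ioo (0 : ℝ) ε₀, c * ε ≤ e' ε ∧ e' ε ≤ C * ε)
    (u : ℕ → ℝ) (hu0 : ∀ n, 0 < u n) (hulim : Tendsto u atTop (𝓝 0))
    (heq : ∀ n, f₁ (u n) - (1 / Real.pi) * Real.log (u n) =
        f₂ (e' (u n)) + (1 / Real.pi) * Real.log (e' (u n))) :
    False := by
  -- eventually u n ∈ Ioo 0 ε₀
  have hev : ∀ᶠ n in atTop, u n ∈ Set.Ioo (0 : ℝ) ε₀ := by
    filter_upwards [hulim.eventually (eventually_lt_nhds hε₀)] with n h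
    exact ⟨hu0 n, h⟩
  -- e'(u n) → 0 by squeeze
  have heu0 : Tendsto (fun n => e' (u n)) atTop (𝓝 0) := by
    have hle : ∀ᶠ n in atTop, e' (u n) ≤ C * u n := by
      filter_upwards [hev] with n h using (hcomp _ h).2
    have hge : ∀ᶠ n in atTop, 0 ≤ e' (u n) := by
      filter_upwards [hev] with n h
      exact le_trans (mul_nonneg hc.le (hu0 n).le) (hcomp _ h).1
    have hC0 : Tendsto (fun n => C * u n) atTop (𝓝 0) := by
      simpa using hulim.const_mul C
    exact squeeze_zero' hge hle hC0
  -- e' 0 = 0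
  have he'0 : e' 0 = 0 :=
    tendsto_nhds_unique ((he'.continuousAt.tendsto).comp hulim) heu0
  -- LHS convergence: f₁(u n) - f₂(e'(u n)) converges
  have hL : Tendsto (fun n => Real.pi * (f₁ (u n) - f₂ (e' (u n)))) atTop
      (𝓝 (Real.pi * (f₁ 0 - f₂ 0))) := by
    have h1 : Tendsto (fun n => f₁ (u n)) atTop (𝓝 (f₁ 0)) :=
      (hf₁.continuousAt.tendsto).comp hulim
    have h2 : Tendsto (fun n => f₂ (e' (u n))) atTop (𝓝 (f₂ 0)) := by
      simpa [he'0, Function.comp_def] using (he'0 ▸ hf₂.continuousAt.tendsto :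
        Tendsto f₂ (𝓝 0) (𝓝 (f₂ 0))).comp heu0
    exact ((h1.sub h2).const_mul _)
  -- identity: log u n + log e'(u n) = π (f₁ - f₂)
  have hkey : ∀ᶠ n in atTop,
      Real.log (u n) + Real.log (e' (u n)) = Real.pi * (f₁ (u n) - f₂ (e' (u n))) := by
    filter_upwards [] with n
    have h := heq n
    have hpi : Real.pi ≠ 0 := Real.pi_ne_zero
    field_simp at h ⊢
    linarith
  -- but LHS tends to -∞
  have hBot : Tendsto (fun n => Real.log (u n) + Real.log (e' (u n))) atTop atBot := by
    have h1 : Tendsto (fun n => Real.log (u n)) atTop atBot := by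
      refine Real.tendsto_log_nhdsGT_zero.comp ?_
      exact tendsto_nhdsWithin_of_tendsto_nhds_of_eventually_within _ hulim
        (Eventually.of_forall fun n => hu0 n)
    have h2 : Tendsto (fun n => Real.log (e' (u n))) atTop atBot := by
      refine Real.tendsto_log_nhdsGT_zero.comp ?_
      refine tendsto_nhdsWithin_of_tendsto_nhds_of_eventually_within _ heu0 ?_
      filter_upwards [hev] with n h
      exact lt_of_lt_of_le (mul_pos hc (hu0 n)) (hcomp _ h).1
    exact Filter.Tendsto.atBot_add_atBot h1 h2
  have : Tendsto (fun n => Real.log (u n) + Real.log (e' (u n))) atTop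
      (𝓝 (Real.pi * (f₁ 0 - f₂ 0))) := hL.congr' (hkey.mono fun n h => h.symm)
  exact not_tendsto_atBot_of_tendsto_nhds this hBot
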